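/- arXiv:1910.02835 — 3 statements merged into one kernel-verified Lean document; each statement's English description precedes it below -/
import Mathlib

section
/- If the set of unviable states S_U is nonempty with n = |S_U| and n ≥ 1, then for every integer i with 1 ≤ i ≤ L, where L is the maximum over s ∈ S_U of the length of the longest trajectory from s, there exists a state s ∈ S_U whose longest trajectory has length exactly i. -/
/-- The trajectory induced by deterministic dynamics `T`, start state `s0` and actions `act`. -/
def trajFrom {S A : Type*} (T : S → A → S) (s0 : S) (act : ℕ → A) : ℕ → S
  | 0 => s0
  | i + 1 => T (trajFrom T s0 act i) (act i)

/-- A set `K` avoiding the failure set `SF` is viability-invariant if every state in `K`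
admits an action keeping the system in `K`. -/
def ViabilityInvariant {S A : Type*} (T : S → A → S) (SF : Set S) (K : Set S) : Prop :=
  (∀ s ∈ K, s ∉ SF) ∧ ∀ s ∈ K, ∃ a, T s a ∈ K

/-- The viability kernel: the maximal viability-invariant subset of `S \ SF`. -/
def viabilityKernel {S A : Type*} (T : S → A → S) (SF : Set S) : Set S :=
  ⋃₀ {K | ViabilityInvariant T SF K}

/-- `lenU T SF SU s` is the length (number of transitions) of the longest trajectory
starting at `s` that remains in `SU` and terminates upon entering `SF`. -/
noncomputable def lenU {S A : Type*} (T : S → A → S) (SF SU : Set S) (s : S) : ℕ :=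
  sSup {k | ∃ act : ℕ → A,
    (∀ i < k, trajFrom T s act i ∈ SU) ∧ trajFrom T s act k ∈ SF}

section aux
variable {S A : Type*} (T : S → A → S) (SF SU : Set S)

/-- shift lemma -/
lemma traj_shift (s : S) (act : ℕ → A) (n : ℕ) :
    trajFrom T (T s (act 0)) (fun i => act (i+1)) n = trajFrom T s act (n+1) := by
  induction n with
  | zero => rfl
  | succ n ih => simp [trajFrom, ih]

/-- prepend lemma -/
lemma traj_prepend (s : S) (a : A) (act' : ℕ → A) (n : ℕ) :
    trajFrom T s (fun i => Nat.rec a (fun j _ => act' j) i) (n+1)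
      = trajFrom T (T s a) act' n := by
  induction n with
  | zero => rfl
  | succ n ih => simp only [trajFrom] at ih ⊢; rw [ih]

variable [Fintype S] (hSU : SU = (viabilityKernel T SF ∪ SF)ᶜ)
include hSU

lemma su_not_sf {s : S} (hs : s ∈ SU) : s ∉ SF := by
  rw [hSU] at hs; intro h; exact hs (Or.inr h)

lemma su_not_ker {s : S} (hs : s ∈ SU) : s ∉ viabilityKernel T SF := by
  rw [hSU] at hs; intro h; exact hs (Or.inl h)

lemma len_bound {s : S} {k : ℕ} (hk : k ∈ {k | ∃ act : ℕ → A,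
    (∀ i < k, trajFrom T s act i ∈ SU) ∧ trajFrom T s act k ∈ SF}) :
    k ≤ Fintype.card S := by
  obtain ⟨act, hin, hfin⟩ := hk
  have hinj : Function.Injective (fun j : Fin (k+1) => trajFrom T s act j) := by
    have key : ∀ p q : ℕ, p < q → q ≤ k → trajFrom T s act p ≠ trajFrom T s act q := by
      intro p q hpq hqk heq
      rcases eq_or_lt_of_le hqk with hq | hq
      · subst hq
        exact su_not_sf T SF SU hSU (hin p hpq) (heq ▸ hfin)
      · -- cycle in SU: contradiction with kernel
        set K : Set S := {x | ∃ j, p ≤ j ∧ j < q ∧ x = trajFrom T s act j} with hK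
        have hKinv : ViabilityInvariant T SF K := by
          constructor
          · rintro x ⟨j, hpj, hjq, rfl⟩
            exact su_not_sf T SF SU hSU (hin j (hjq.trans hq))
          · rintro x ⟨j, hpj, hjq, rfl⟩
            refine ⟨act j, ?_⟩
            rcases eq_or_lt_of_le (Nat.succ_le_of_lt hjq) with hj1 | hj1
            · refine ⟨p, le_refl p, hpq, ?_⟩
              show trajFrom T s act (j+1) = trajFrom T s act p
              rw [show j+1 = q from hj1]
              exact heq.symm
            · exact ⟨j+1, le_trans hpj (Nat.le_succ j), hj1, rfl⟩
        have hmem : trajFrom T s act p ∈ viabilityKernel T SF :=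
          ⟨K, hKinv, ⟨p, le_refl p, hpq, rfl⟩⟩
        exact su_not_ker T SF SU hSU (hin p (hpq.trans hq)) hmem
    intro p q h
    by_contra hne
    rcases lt_or_gt_of_ne (fun hc : (p:ℕ) = q => hne (Fin.ext hc)) with hlt | hlt
    · exact key p q hlt (Nat.lt_succ_iff.mp q.isLt) h
    · exact key q p hlt (Nat.lt_succ_iff.mp p.isLt) h.symm
  have := Fintype.card_le_of_injective _ hinj
  simp only [Fintype.card_fin] at this
  omega

lemma len_bdd (s : S) : BddAbove {k | ∃ act : ℕ → A,
    (∀ i < k, trajFrom T s act i ∈ SU) ∧ trajFrom T s act k ∈ SF} :=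
  ⟨Fintype.card S, fun _ hk => len_bound T SF SU hSU hk⟩

lemma lenU_le (s : S) : lenU T SF SU s ≤ Fintype.card S := by
  unfold lenU
  rcases Set.eq_empty_or_nonempty {k | ∃ act : ℕ → A,
      (∀ i < k, trajFrom T s act i ∈ SU) ∧ trajFrom T s act k ∈ SF} with h | h
  · rw [h]; simp
  · exact csSup_le h (fun _ hk => len_bound T SF SU hSU hk)

/-- descent -/
lemma descent {s : S} (hs : s ∈ SU) {k : ℕ} (hk : lenU T SF SU s = k) (h2 : 2 ≤ k) :
    ∃ s' ∈ SU, lenU T SF SU s' = k - 1 := by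
  have hbdd := len_bdd T SF SU hSU s
  have hne : {k | ∃ act : ℕ → A,
      (∀ i < k, trajFrom T s act i ∈ SU) ∧ trajFrom T s act k ∈ SF}.Nonempty := by
    by_contra h
    rw [Set.not_nonempty_iff_eq_empty] at h
    rw [lenU, h] at hk
    simp at hk
    omega
  have hmem := Nat.sSup_mem hne hbdd
  rw [← lenU, hk] at hmem
  obtain ⟨act, hin, hfin⟩ := hmem
  set s' := T s (act 0) with hs'
  have hs'SU : s' ∈ SU := by
    have := hin 1 (by omega)
    simpa [trajFrom] using this
  refine ⟨s', hs'SU, ?_⟩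
  have hshift : ∀ n, trajFrom T s' (fun i => act (i+1)) n = trajFrom T s act (n+1) :=
    traj_shift T s act
  have hk1mem : k - 1 ∈ {m | ∃ act2 : ℕ → A,
      (∀ i < m, trajFrom T s' act2 i ∈ SU) ∧ trajFrom T s' act2 m ∈ SF} := by
    refine ⟨fun i => act (i+1), fun j hj => ?_, ?_⟩
    · rw [hshift]; exact hin (j+1) (by omega)
    · rw [hshift]; have : k - 1 + 1 = k := by omega
      rw [this]; exact hfin
  have hge : k - 1 ≤ lenU T SF SU s' := le_csSup (len_bdd T SF SU hSU s') hk1mem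
  have hle : lenU T SF SU s' ≤ k - 1 := by
    by_contra h
    push_neg at h
    -- lenU s' ≥ k, build trajectory of length lenU s' + 1 from s
    have hne' : {m | ∃ act2 : ℕ → A,
        (∀ i < m, trajFrom T s' act2 i ∈ SU) ∧ trajFrom T s' act2 m ∈ SF}.Nonempty :=
      ⟨k - 1, hk1mem⟩
    have hmem' := Nat.sSup_mem hne' (len_bdd T SF SU hSU s')
    rw [← lenU] at hmem'
    set m := lenU T SF SU s' with hm
    obtain ⟨act2, hin2, hfin2⟩ := hmem'
    set act3 : ℕ → A := fun i => Nat.rec (act 0) (fun j _ => act2 j) i with hact3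
    have hpre : ∀ n, trajFrom T s act3 (n+1) = trajFrom T s' act2 n :=
      traj_prepend T s (act 0) act2
    have hm1 : m + 1 ∈ {j | ∃ act4 : ℕ → A,
        (∀ i < j, trajFrom T s act4 i ∈ SU) ∧ trajFrom T s act4 j ∈ SF} := by
      refine ⟨act3, fun j hj => ?_, by rw [hpre]; exact hfin2⟩
      match j with
      | 0 => exact hin 0 (by omega)
      | j+1 => rw [hpre]; exact hin2 j (by omega)
    have := le_csSup hbdd hm1
    rw [← lenU, hk] at this
    omega
  omega

end aux

lemma reach_down {S A : Type*} [Fintype S] (T : S → A → S) (SF SU : Set S)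
    (hSU : SU = (viabilityKernel T SF ∪ SF)ᶜ) :
    ∀ d i, 1 ≤ i → ∀ s ∈ SU, lenU T SF SU s = i + d → ∃ s' ∈ SU, lenU T SF SU s' = i := by
  intro d
  induction d with
  | zero => intro i _ s hs h; exact ⟨s, hs, h⟩
  | succ d ih =>
    intro i hi s hs h
    obtain ⟨s', hs', h'⟩ := descent T SF SU hSU hs h (by omega)
    exact ih i hi s' hs' (by omega)

/-- If the set of unviable states `S_U` is nonempty (so `n = |S_U| ≥ 1`), then for every
integer `i` with `1 ≤ i ≤ L`, where `L` is the maximum over `s ∈ S_U` of the length of the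
longest trajectory from `s`, there exists a state `s ∈ S_U` whose longest trajectory has
length exactly `i`. -/
theorem exists_state_of_each_length
    {S A : Type*} [Fintype S] (T : S → A → S) (SF : Set S)
    (SU : Set S) (hSU : SU = (viabilityKernel T SF ∪ SF)ᶜ)
    (hne : SU.Nonempty) (hn : 1 ≤ SU.ncard)
    (i : ℕ) (h1 : 1 ≤ i) (hL : i ≤ sSup ((fun s => lenU T SF SU s) '' SU)) :
    ∃ s ∈ SU, lenU T SF SU s = i := by
  have himgbdd : BddAbove ((fun s => lenU T SF SU s) '' SU) := by
    refine ⟨Fintype.card S, ?_⟩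
    rintro _ ⟨s, hs, rfl⟩
    exact lenU_le T SF SU hSU s
  have himgne := hne.image (fun s => lenU T SF SU s)
  obtain ⟨s0, hs0, hs0L⟩ := Nat.sSup_mem himgne himgbdd
  have hi0 : i ≤ lenU T SF SU s0 := by rw [← hs0L] at hL; simpa using hL
  exact reach_down T SF SU hSU (lenU T SF SU s0 - i) i h1 s0 hs0 (by omega)
end

section
/- A state s belongs to the viability kernel S_V if and only if there exists an infinite sequence of actions (a_0, a_1, ...) such that every state along the induced trajectory avoids the failure set S_F. -/
/-- A state belongs to the viability kernel iff there exists an infinite action sequence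
whose induced trajectory avoids the failure set forever. -/
theorem mem_kernel_iff_forever_avoiding
    {S A : Type*} (T : S → A → S) (SF : Set S) (s : S) :
    s ∈ viabilityKernel T SF ↔
      ∃ act : ℕ → A, ∀ i : ℕ, trajFrom T s act i ∉ SF := by
  constructor
  · rintro ⟨K, ⟨hKF, hKinv⟩, hsK⟩
    choose f hf using hKinv
    -- build sequence of states in K
    let st : ℕ → {x // x ∈ K} := fun n => Nat.rec ⟨s, hsK⟩
      (fun _ p => ⟨T p.1 (f p.1 p.2), hf p.1 p.2⟩) n
    refine ⟨fun n => f (st n).1 (st n).2, ?_⟩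
    have key : ∀ i, trajFrom T s (fun n => f (st n).1 (st n).2) i = (st i).1 := by
      intro i
      induction i with
      | zero => rfl
      | succ n ih => simp [trajFrom, ih]; rfl
    intro i
    rw [key i]
    exact hKF _ (st i).2
  · rintro ⟨act, hact⟩
    refine ⟨{x | ∃ a : ℕ → A, ∀ i, trajFrom T x a i ∉ SF}, ⟨?_, ?_⟩, act, hact⟩
    · rintro x ⟨a, ha⟩
      exact ha 0
    · rintro x ⟨a, ha⟩
      refine ⟨a 0, fun n => a (n + 1), fun i => ?_⟩
      have : trajFrom T (T x (a 0)) (fun n => a (n + 1)) i = trajFrom T x a (i + 1) := by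
        induction i with
        | zero => rfl
        | succ n ih => simp [trajFrom, ih]
      rw [this]
      exact ha (i + 1)
end

section
/- If the agent starts at a state s ∈ S_λ and always selects actions from Q_λ when available, then such actions are indeed always available, and the induced trajectory remains in S_λ forever: sampling from Q_λ maps the system to a state in S_λ, from which Q_λ is again nonempty. -/
/-- The safety measure: the (counting) measure of the viable actions at state `s`. -/
noncomputable def safetyMeasure {S A : Type*} (T : S → A → S) (SF : Set S) (s : S) : ℕ :=
  {a : A | T s a ∈ viabilityKernel T SF}.ncard

lemma kernel_step {S A : Type*} (T : S → A → S) (SF : Set S) {s : S}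
    (hs : s ∈ viabilityKernel T SF) : ∃ a, T s a ∈ viabilityKernel T SF := by
  obtain ⟨K, hK, hsK⟩ := hs
  obtain ⟨a, ha⟩ := hK.2 s hsK
  exact ⟨a, K, hK, ha⟩

lemma pos_of_mem_kernel {S A : Type*} [Finite A] (T : S → A → S) (SF : Set S) {s : S}
    (hs : s ∈ viabilityKernel T SF) : 0 < safetyMeasure T SF s := by
  obtain ⟨a, ha⟩ := kernel_step T SF hs
  have hfin : {a : A | T s a ∈ viabilityKernel T SF}.Finite := Set.toFinite _
  exact (Set.Nonempty.ncard_pos hfin) ⟨a, ha⟩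

/-- Starting from a state in the zero safe level set `S_0` (i.e. `Λ(s) > 0`), actions in
`Q_0` (i.e. with `Λ_Q(s,a) = Λ(T(s,a)) > 0`) are always available, and by always selecting
such actions the induced trajectory remains in `S_0` forever. (Failure states are
absorbing.) -/
theorem safe_actions_always_available
    {S A : Type*} [Finite A] (T : S → A → S) (SF : Set S)
    (habs : ∀ s ∈ SF, ∀ a : A, T s a ∈ SF)
    (s : S) (hs : 0 < safetyMeasure T SF s) :
    ∃ act : ℕ → A, ∀ i : ℕ,
      0 < safetyMeasure T SF (trajFrom T s act i) ∧
      0 < safetyMeasure T SF (T (trajFrom T s act i) (act i)) := by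
  classical
  have hA : Nonempty A := by
    by_contra h
    simp only [not_nonempty_iff] at h
    have : {a : A | T s a ∈ viabilityKernel T SF} = ∅ := Set.eq_empty_of_isEmpty _
    simp [safetyMeasure, this] at hs
  -- choose a safe action at each state with positive safety measure
  have hpick : ∀ t : S, 0 < safetyMeasure T SF t →
      ∃ a, T t a ∈ viabilityKernel T SF := by
    intro t ht
    have : {a : A | T t a ∈ viabilityKernel T SF}.Nonempty := by
      rw [← Set.ncard_pos (Set.toFinite _)] at *
      exact ht
    exact this
  let f : S → A := fun t =>
    if h : ∃ a, T t a ∈ viabilityKernel T SF then h.choose else Classical.arbitrary A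
  have hf : ∀ t : S, 0 < safetyMeasure T SF t → T t (f t) ∈ viabilityKernel T SF := by
    intro t ht
    have h := hpick t ht
    simp only [f, dif_pos h]
    exact h.choose_spec
  -- define actions by recursion along the trajectory
  let act : ℕ → A := fun i => f (trajFrom T s (fun j => f (trajFrom T s (fun _ => Classical.arbitrary A) j)) i)
  let st : ℕ → S := fun i => Nat.rec s (fun _ t => T t (f t)) i
  refine ⟨fun i => f (st i), fun i => ?_⟩
  have htraj : ∀ i, trajFrom T s (fun j => f (st j)) i = st i := by
    intro i
    induction i with
    | zero => rfl
    | succ n ih => simp [trajFrom, ih, st]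
  have hpos : ∀ i, 0 < safetyMeasure T SF (st i) := by
    intro i
    induction i with
    | zero => exact hs
    | succ n ih =>
      have := hf (st n) ih
      exact pos_of_mem_kernel T SF this
  rw [htraj i]
  exact ⟨hpos i, pos_of_mem_kernel T SF (hf (st i) (hpos i))⟩
end
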